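/- With V the disjoint union of m copies of a finite group G and N the normalizer of R(G) in Sym(V), the stabilizer in N of the point 1_r (the identity element in the r-th copy) equals (L_1 × ⋯ × L_{r-1} × L_{r+1} × ⋯ × L_m) ⋊ ((S_m)_{G_r} × Aut(G)), where (S_m)_{G_r} ≅ S_{m-1} is the stabilizer of index r in S_m. -/

import Mathlib

/-- Right multiplication permutation `R(g) : x_i ↦ (xg)_i` on `V = Fin m × G`. -/
def Rperm (m : ℕ) {G : Type*} [Group G] (g : G) : Equiv.Perm (Fin m × G) where
  toFun v := (v.1, v.2 * g)
  invFun v := (v.1, v.2 * g⁻¹)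
  left_inv v := by simp
  right_inv v := by simp

/-- The subgroup `R(G) = {R(g) : g ∈ G}` of `Sym(V)`. -/
def RG (m : ℕ) (G : Type*) [Group G] : Subgroup (Equiv.Perm (Fin m × G)) where
  carrier := {σ | ∃ g : G, σ = Rperm m g}
  one_mem' := ⟨1, Equiv.ext fun v => by simp [Rperm]⟩
  mul_mem' := by
    rintro _ _ ⟨g, rfl⟩ ⟨h, rfl⟩
    exact ⟨h * g, Equiv.ext fun v => by simp [Rperm, mul_assoc]⟩
  inv_mem' := by
    rintro _ ⟨g, rfl⟩
    exact ⟨g⁻¹, Equiv.ext fun v => by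
      simp [Rperm, Equiv.Perm.inv_def]⟩

/-- `LLperm f : x_i ↦ ((f i)⁻¹ x)_i`, the product `L_1(f 1) ⋯ L_m(f m)`. -/
def LLperm (m : ℕ) {G : Type*} [Group G] (f : Fin m → G) : Equiv.Perm (Fin m × G) where
  toFun v := (v.1, (f v.1)⁻¹ * v.2)
  invFun v := (v.1, f v.1 * v.2)
  left_inv v := by simp
  right_inv v := by simp

/-- The subgroup `L = L_1 × ⋯ × L_m` of `Sym(V)`. -/
def LL (m : ℕ) (G : Type*) [Group G] : Subgroup (Equiv.Perm (Fin m × G)) where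
  carrier := {σ | ∃ f : Fin m → G, σ = LLperm m f}
  one_mem' := ⟨fun _ => 1, Equiv.ext fun v => by simp [LLperm]⟩
  mul_mem' := by
    rintro _ _ ⟨f, rfl⟩ ⟨f', rfl⟩
    exact ⟨fun i => f' i * f i, Equiv.ext fun v => by simp [LLperm, mul_assoc]⟩
  inv_mem' := by
    rintro _ ⟨f, rfl⟩
    exact ⟨fun i => (f i)⁻¹, Equiv.ext fun v => by
      simp [LLperm, Equiv.Perm.inv_def]⟩

/-- `S_m` acting on `V` by permuting the indices: `σ : x_i ↦ x_{σ(i)}`. -/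
def Pperm (m : ℕ) (G : Type*) [Group G] (σ : Equiv.Perm (Fin m)) :
    Equiv.Perm (Fin m × G) :=
  Equiv.prodCongr σ (Equiv.refl G)

/-- The image of `S_m` in `Sym(V)`. -/
def Ssub (m : ℕ) (G : Type*) [Group G] : Subgroup (Equiv.Perm (Fin m × G)) where
  carrier := {p | ∃ σ : Equiv.Perm (Fin m), p = Pperm m G σ}
  one_mem' := ⟨1, Equiv.ext fun v => by simp [Pperm]⟩
  mul_mem' := by
    rintro _ _ ⟨σ, rfl⟩ ⟨τ, rfl⟩
    exact ⟨σ * τ, Equiv.ext fun v => by cases v; simp [Pperm]⟩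
  inv_mem' := by
    rintro _ ⟨σ, rfl⟩
    exact ⟨σ⁻¹, Equiv.ext fun v => by simp [Pperm, Equiv.Perm.inv_def]⟩

/-- `Aut(G)` acting diagonally on `V`: `α : x_i ↦ (x^α)_i`. -/
def Aperm (m : ℕ) {G : Type*} [Group G] (α : MulAut G) : Equiv.Perm (Fin m × G) :=
  Equiv.prodCongr (Equiv.refl (Fin m)) α.toEquiv

/-- The image of `Aut(G)` in `Sym(V)`. -/
def Asub (m : ℕ) (G : Type*) [Group G] : Subgroup (Equiv.Perm (Fin m × G)) where
  carrier := {p | ∃ α : MulAut G, p = Aperm m α}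
  one_mem' := ⟨1, Equiv.ext fun v => by simp [Aperm]⟩
  mul_mem' := by
    rintro _ _ ⟨α, rfl⟩ ⟨β, rfl⟩
    exact ⟨α * β, Equiv.ext fun v => by cases v; simp [Aperm]⟩
  inv_mem' := by
    rintro _ ⟨α, rfl⟩
    exact ⟨α⁻¹, Equiv.ext fun v => by cases v; simp [Aperm, Equiv.Perm.inv_def, MulAut.inv_def]⟩


/-- The subgroup `L_1 × ⋯ × L_{r-1} × L_{r+1} × ⋯ × L_m` (left multiplications
that are trivial on the `r`-th copy). -/
def Lnot (m : ℕ) (G : Type*) [Group G] (r : Fin m) : Subgroup (Equiv.Perm (Fin m × G)) where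
  carrier := {σ | ∃ f : Fin m → G, f r = 1 ∧ σ = LLperm m f}
  one_mem' := ⟨fun _ => 1, rfl, Equiv.ext fun v => by simp [LLperm]⟩
  mul_mem' := by
    rintro _ _ ⟨f, hf, rfl⟩ ⟨f', hf', rfl⟩
    exact ⟨fun i => f' i * f i, by simp [hf, hf'],
      Equiv.ext fun v => by simp [LLperm, mul_assoc]⟩
  inv_mem' := by
    rintro _ ⟨f, hf, rfl⟩
    exact ⟨fun i => (f i)⁻¹, by simp [hf], Equiv.ext fun v => by
      simp [LLperm, Equiv.Perm.inv_def]⟩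

/-- The stabilizer `(S_m)_{G_r}` of the index `r` inside the copy of `S_m` in `Sym(V)`. -/
def SstabR (m : ℕ) (G : Type*) [Group G] (r : Fin m) : Subgroup (Equiv.Perm (Fin m × G)) where
  carrier := {p | ∃ σ : Equiv.Perm (Fin m), σ r = r ∧ p = Pperm m G σ}
  one_mem' := ⟨1, rfl, Equiv.ext fun v => by simp [Pperm]⟩
  mul_mem' := by
    rintro _ _ ⟨σ, hσ, rfl⟩ ⟨τ, hτ, rfl⟩
    exact ⟨σ * τ, by simp [hσ, hτ], Equiv.ext fun v => by cases v; simp [Pperm]⟩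
  inv_mem' := by
    rintro _ ⟨σ, hσ, rfl⟩
    refine ⟨σ⁻¹, ?_, Equiv.ext fun v => by simp [Pperm, Equiv.Perm.inv_def]⟩
    simpa using congrArg (σ⁻¹ : Equiv.Perm (Fin m)) hσ |>.symm

section Aux

variable {G : Type*} [Group G] {m : ℕ}

lemma Rperm_apply (g : G) (v : Fin m × G) : Rperm m g v = (v.1, v.2 * g) := rfl

lemma Rperm_mul (g h : G) : Rperm m g * Rperm m h = Rperm m (h * g) :=
  Equiv.ext fun v => by simp [Rperm, mul_assoc]

lemma mem_normalizer_of_conj (σ : Equiv.Perm (Fin m × G)) (φ : G → G)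
    (hφ : Function.Surjective φ)
    (h : ∀ g, σ * Rperm m g * σ⁻¹ = Rperm m (φ g)) :
    σ ∈ Subgroup.normalizer (RG m G) := by
  rw [Subgroup.mem_normalizer_iff]
  intro p
  constructor
  · rintro ⟨g, rfl⟩; exact ⟨φ g, h g⟩
  · rintro ⟨g, hg⟩
    obtain ⟨g', rfl⟩ := hφ g
    refine ⟨g', ?_⟩
    have h2 : σ * p * σ⁻¹ = σ * Rperm m g' * σ⁻¹ := by rw [hg, h g']
    calc p = σ⁻¹ * (σ * p * σ⁻¹) * σ := by group
      _ = σ⁻¹ * (σ * Rperm m g' * σ⁻¹) * σ := by rw [h2]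
      _ = Rperm m g' := by group

end Aux

/-- The stabilizer in `N = N_{Sym(V)}(R(G))` of the point `1_r`
(the identity in the `r`-th copy) equals
`(L_1 × ⋯ × L_{r-1} × L_{r+1} × ⋯ × L_m) ⋊ ((S_m)_{G_r} × Aut(G))`. -/
theorem stabilizer_in_N (G : Type*) [Group G] [Finite G] (m : ℕ) (r : Fin m) :
    Subgroup.normalizer (RG m G) ⊓
        MulAction.stabilizer (Equiv.Perm (Fin m × G)) ((r, 1) : Fin m × G) =
      Lnot m G r ⊔ (SstabR m G r ⊔ Asub m G) := by
  apply le_antisymm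
  · -- hard direction
    rintro σ ⟨hN, hstab⟩
    have hstab : σ (r, 1) = ((r, 1) : Fin m × G) := hstab
    -- extract ψ
    have hconj : ∀ g : G, ∃ h : G, σ * Rperm m g * σ⁻¹ = Rperm m h := by
      intro g
      exact (Subgroup.mem_normalizer_iff.mp hN (Rperm m g)).mp ⟨g, rfl⟩
    choose ψ hψ using hconj
    have Rinj : ∀ g h : G, Rperm m g = Rperm m h → g = h := by
      intro g h e
      have := congrArg (fun π : Equiv.Perm (Fin m × G) => (π (r, 1)).2) e
      simpa [Rperm] using this
    have key : ∀ (i : Fin m) (x g : G),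
        σ (i, x * g) = ((σ (i, x)).1, (σ (i, x)).2 * ψ g) := by
      intro i x g
      have h2 : σ * Rperm m g = Rperm m (ψ g) * σ := by
        have := hψ g
        calc σ * Rperm m g = (σ * Rperm m g * σ⁻¹) * σ := by group
          _ = Rperm m (ψ g) * σ := by rw [this]
      have := congrArg (fun π : Equiv.Perm (Fin m × G) => π (i, x)) h2
      simpa [Rperm, Equiv.Perm.mul_apply] using this
    set a : Fin m → Fin m := fun i => (σ (i, 1)).1 with ha
    set b : Fin m → G := fun i => (σ (i, 1)).2 with hb
    have hform : ∀ (i : Fin m) (x : G), σ (i, x) = (a i, b i * ψ x) := by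
      intro i x
      have := key i 1 x
      simpa using this
    have hψmul : ∀ g h : G, ψ (g * h) = ψ g * ψ h := by
      intro g h
      apply Rinj
      calc Rperm m (ψ (g * h)) = σ * Rperm m (g * h) * σ⁻¹ := (hψ _).symm
        _ = σ * (Rperm m h * Rperm m g) * σ⁻¹ := by rw [Rperm_mul]
        _ = (σ * Rperm m h * σ⁻¹) * (σ * Rperm m g * σ⁻¹) := by group
        _ = Rperm m (ψ h) * Rperm m (ψ g) := by rw [hψ, hψ]
        _ = Rperm m (ψ g * ψ h) := Rperm_mul _ _
    have hψinj : Function.Injective ψ := by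
      intro g h e
      apply Rinj
      have h2 : σ * Rperm m g * σ⁻¹ = σ * Rperm m h * σ⁻¹ := by
        rw [hψ, hψ, e]
      exact mul_right_cancel (mul_left_cancel h2)
    have hψbij : Function.Bijective ψ := Finite.injective_iff_bijective.mp hψinj
    set Ψ : MulAut G := MulEquiv.ofBijective (MonoidHom.mk' ψ hψmul) hψbij with hΨ
    have hΨapp : ∀ x : G, Ψ x = ψ x := fun x => rfl
    have hψ1 : ψ 1 = 1 := map_one Ψ
    -- a bijective
    have hainj : Function.Injective a := by
      intro i j e
      obtain ⟨x, hx⟩ := hψbij.2 ((b i)⁻¹ * b j)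
      have : σ (i, x) = σ (j, 1) := by
        rw [hform, hform, hψ1, e, hx, mul_one]
        simp [mul_assoc]
      have := σ.injective this
      exact (Prod.ext_iff.mp this).1
    set τ : Equiv.Perm (Fin m) :=
      Equiv.ofBijective a (Finite.injective_iff_bijective.mp hainj) with hτ
    have hτapp : ∀ i, τ i = a i := fun i => rfl
    -- stabilizer conditions
    have har : a r = r := by
      have := congrArg Prod.fst hstab
      simpa [ha] using this
    have hbr : b r = 1 := by
      have := congrArg Prod.snd hstab
      simpa [hb] using this
    set f : Fin m → G := fun j => (b (τ.symm j))⁻¹ with hf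
    have hdecomp : σ = LLperm m f * (Pperm m G τ * Aperm m Ψ) := by
      apply Equiv.ext
      rintro ⟨i, x⟩
      have : (LLperm m f * (Pperm m G τ * Aperm m Ψ)) (i, x)
          = (τ i, (f (τ i))⁻¹ * ψ x) := rfl
      rw [this, hform]
      have h1 : f (τ i) = (b i)⁻¹ := by
        rw [hf]; simp
      rw [h1, hτapp]
      simp
    have hfr : f r = 1 := by
      have hsr : τ.symm r = r := by
        rw [Equiv.symm_apply_eq, hτapp, har]
      rw [hf]
      simp [hsr, hbr]
    rw [hdecomp]
    refine mul_mem (Subgroup.mem_sup_left ⟨f, hfr, rfl⟩)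
      (Subgroup.mem_sup_right (mul_mem (Subgroup.mem_sup_left ⟨τ, by rw [hτapp, har], rfl⟩)
        (Subgroup.mem_sup_right ⟨Ψ, rfl⟩)))
  · -- easy direction
    refine sup_le ?_ (sup_le ?_ ?_)
    · rintro _ ⟨f, hfr, rfl⟩
      refine ⟨mem_normalizer_of_conj _ id Function.surjective_id fun g => ?_, ?_⟩
      · apply Equiv.ext
        rintro ⟨i, x⟩
        simp [LLperm, Rperm, Equiv.Perm.inv_def, mul_assoc]
      · show LLperm m f (r, 1) = ((r, 1) : Fin m × G)
        simp [LLperm, hfr]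
    · rintro _ ⟨π, hπr, rfl⟩
      refine ⟨mem_normalizer_of_conj _ id Function.surjective_id fun g => ?_, ?_⟩
      · apply Equiv.ext
        rintro ⟨i, x⟩
        simp [Pperm, Rperm, Equiv.Perm.inv_def]
      · show Pperm m G π (r, 1) = ((r, 1) : Fin m × G)
        simp [Pperm, hπr]
    · rintro _ ⟨α, rfl⟩
      refine ⟨mem_normalizer_of_conj _ α α.surjective fun g => ?_, ?_⟩
      · apply Equiv.ext
        rintro ⟨i, x⟩
        simp [Aperm, Rperm, Equiv.Perm.inv_def, map_mul]
      · show Aperm m α (r, 1) = ((r, 1) : Fin m × G)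
        simp [Aperm]
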